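/- Let B ⊆ ℕ^↑ be a 𝔟-scale, let X = B ∪ Q ⊆ Inc with the subspace topology, let Q = {q_n : n ∈ ℕ} be a bijective enumeration of Q, and set U_n = X ∖ {q_n}. Then for every B' ⊆ B with |B'| = 𝔟 and every sequence (V_n)_{n∈ℕ} of clopen subsets of X with V_n ⊆ U_n for all n, there exists x ∈ B' such that the set {n ∈ ℕ : x ∉ V_n} is infinite. -/

import Mathlib

open Set Filter Topology

attribute [local instance] Classical.propDecidable

/-- The unbounding number 𝔟: the least cardinality of a `≤*`-unbounded subset of `ℕ^ℕ`. -/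
noncomputable def bCard : Cardinal :=
  sInf {c : Cardinal | ∃ S : Set (ℕ → ℕ), Cardinal.mk ↥S = c ∧
    ∀ g : ℕ → ℕ, ∃ f ∈ S, ¬ ∀ᶠ n in atTop, f n ≤ g n}

/-- A 𝔟-scale: a `≤*`-increasing, `≤*`-unbounded family of strictly increasing functions,
enumerated injectively by the ordinals below 𝔟. -/
structure IsBScale (b : {o : Ordinal // o < bCard.ord} → (ℕ → ℕ)) : Prop where
  strictMono : ∀ α, StrictMono (b α)
  inj : Function.Injective b
  mono : ∀ α β : {o : Ordinal // o < bCard.ord}, α < β → ∀ᶠ n in atTop, b α n ≤ b β n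
  unbounded : ∀ g : ℕ → ℕ, ∃ α, ¬ ∀ᶠ n in atTop, b α n ≤ g n

/-- The set `Inc` of nondecreasing elements of `(ℕ∞)^ℕ`. -/
def Inc : Set (ℕ → ℕ∞) := {x : ℕ → ℕ∞ | Monotone x}

/-- The set `Q` of eventually infinite elements of `Inc`. -/
def Qset : Set (ℕ → ℕ∞) := {x : ℕ → ℕ∞ | Monotone x ∧ ∀ᶠ n in atTop, x n = ⊤}

/-- The inclusion of `ℕ^ℕ` into `(ℕ∞)^ℕ`. -/
def toInc (f : ℕ → ℕ) : ℕ → ℕ∞ := fun n => (f n : ℕ∞)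

/-! ### Auxiliary machinery -/

/-- The "flattening at `m`" of `f`: agrees with `f` below `m`, equals `⊤` from `m` on. -/
def BQaux.Pfun (f : ℕ → ℕ) (m : ℕ) : ℕ → ℕ∞ := fun j => if j < m then (f j : ℕ∞) else ⊤

namespace BQaux

lemma Pfun_mem_Qset {f : ℕ → ℕ} (hf : Monotone f) (m : ℕ) : Pfun f m ∈ Qset := by
  constructor
  · intro j j' hj
    simp only [Pfun]
    by_cases h1 : j < m
    · by_cases h2 : j' < m
      · simp [h1, h2, Nat.cast_le.mpr (hf hj)]
      · simp [h1, h2]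
    · have h2 : ¬ j' < m := by omega
      simp [h1, h2]
  · rw [eventually_atTop]
    exact ⟨m, fun n hn => if_neg (by omega)⟩

lemma Pfun_inj {f : ℕ → ℕ} {m m' : ℕ} (h : Pfun f m = Pfun f m') : m = m' := by
  by_contra hne
  rcases Nat.lt_or_ge m m' with hlt | hge
  · have := congrFun h m
    simp only [Pfun, if_neg (lt_irrefl m), if_pos hlt] at this
    exact (ENat.coe_ne_top _) this.symm
  · have hlt : m' < m := by omega
    have := congrFun h m'
    simp only [Pfun, if_pos hlt, if_neg (lt_irrefl m')] at this
    exact (ENat.coe_ne_top _) this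

/-- From a closed set missing an eventually-`⊤` point, extract a basic neighborhood:
finitely many coordinates, with equality demanded at finite values and a lower bound at `⊤`s. -/
lemma qpoint_nbhd {y : ℕ → ℕ∞} {C : Set (ℕ → ℕ∞)} (hC : IsClosed C) (hy : y ∉ C) :
    ∃ (F : Finset ℕ) (t : ℕ), ∀ x : ℕ → ℕ∞,
      (∀ j ∈ F, y j ≠ ⊤ → x j = y j) → (∀ j ∈ F, y j = ⊤ → (t : ℕ∞) < x j) → x ∉ C := by
  obtain ⟨I, u, hu, hsub⟩ := isOpen_pi_iff.mp hC.isOpen_compl y hy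
  have hts : ∀ j ∈ I, ∃ t : ℕ, y j = ⊤ → ∀ z : ℕ∞, (t : ℕ∞) < z → z ∈ u j := by
    intro j hj
    by_cases h : y j = ⊤
    · have hmem : u j ∈ 𝓝 (⊤ : ℕ∞) := (hu j hj).1.mem_nhds (h ▸ (hu j hj).2)
      obtain ⟨l, hl, hsub'⟩ := exists_Ioc_subset_of_mem_nhds hmem ⟨0, by simp⟩
      lift l to ℕ using hl.ne
      exact ⟨l, fun _ z hz => hsub' ⟨hz, le_top⟩⟩
    · exact ⟨0, fun h' => absurd h' h⟩
  choose t ht using hts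
  classical
  refine ⟨I, I.sup (fun j => if h : j ∈ I then t j h else 0), fun x h1 h2 => ?_⟩
  intro hxC
  apply hsub _ hxC
  intro j hj
  rw [Finset.mem_coe] at hj
  by_cases h : y j = ⊤
  · apply ht j hj h
    refine lt_of_le_of_lt ?_ (h2 j hj h)
    have : t j hj ≤ I.sup (fun j => if h : j ∈ I then t j h else 0) := by
      have := Finset.le_sup (f := fun j => if h : j ∈ I then t j h else 0) hj
      simpa [hj] using this
    exact_mod_cast this
  · rw [h1 j hj h]
    exact (hu j hj).2

/-- Maximum of `u ∘ e ∘ Pfun · m` over all candidate initial segments bounded by `v`. -/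
noncomputable def Tfun (u : ℕ → ℕ) (e : (ℕ → ℕ∞) → ℕ) (m v : ℕ) : ℕ :=
  (Finset.univ : Finset (Fin m → Fin (v+1))).sup
    (fun g => u (e (Pfun (fun j => if h : j < m then (g ⟨j, h⟩ : ℕ) else 0) m)))

lemma le_Tfun (u : ℕ → ℕ) (e : (ℕ → ℕ∞) → ℕ) (f : ℕ → ℕ) (m v : ℕ)
    (hfv : ∀ j, j < m → f j ≤ v) : u (e (Pfun f m)) ≤ Tfun u e m v := by
  have hPeq : Pfun (fun j => if h : j < m then
      (((fun j : Fin m => (⟨f j, Nat.lt_succ_of_le (hfv j j.2)⟩ : Fin (v+1))) ⟨j, h⟩ : Fin (v+1)) : ℕ)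
      else 0) m = Pfun f m := by
    funext j
    simp only [Pfun]
    by_cases h : j < m
    · simp [h]
    · simp [h]
  have := Finset.le_sup (f := fun g : Fin m → Fin (v+1) =>
      u (e (Pfun (fun j => if h : j < m then (g ⟨j, h⟩ : ℕ) else 0) m)))
    (Finset.mem_univ (fun j : Fin m => (⟨f j, Nat.lt_succ_of_le (hfv j j.2)⟩ : Fin (v+1))))
  simp only [hPeq] at this
  exact this

/-- An iterated bound: any monotone `f` which eventually satisfies `f m ≤ u (e (Pfun f m))`
is pointwise bounded by `Hrec`. -/
noncomputable def Hrec (u : ℕ → ℕ) (e : (ℕ → ℕ∞) → ℕ) (M v : ℕ) : ℕ → ℕ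
  | 0 => v
  | (m+1) => if m + 1 ≤ M then v
      else max (Hrec u e M v m) (Tfun u e (m+1) (Hrec u e M v m))

lemma le_Hrec (u : ℕ → ℕ) (e : (ℕ → ℕ∞) → ℕ) (f : ℕ → ℕ) (hf : Monotone f) (M : ℕ)
    (hkey : ∀ m, M < m → f m ≤ u (e (Pfun f m))) :
    ∀ m, f m ≤ Hrec u e M (f M) m := by
  intro m
  induction m with
  | zero => simpa [Hrec] using hf (Nat.zero_le M)
  | succ m ih =>
    by_cases h : m + 1 ≤ M
    · simp only [Hrec, if_pos h]
      exact hf h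
    · simp only [Hrec, if_neg h]
      refine le_max_of_le_right ?_
      refine (hkey (m+1) (by omega)).trans (le_Tfun u e f (m+1) _ ?_)
      intro j hj
      exact (hf (Nat.lt_succ_iff.mp hj)).trans ih

end BQaux

open BQaux

/-- Lemma: with `X = B ∪ Q` (`B` a 𝔟-scale), `Q = {q n : n ∈ ℕ}` bijectively enumerated and
`U n = X ∖ {q n}`: for every `B' ⊆ B` of cardinality 𝔟 and every sequence of sets `V n ⊆ U n`
clopen in `X`, there is `x ∈ B'` such that `{n : x ∉ V n}` is infinite. -/
theorem exists_scale_elt_outside_infinitely_often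
    (b : {o : Ordinal // o < bCard.ord} → (ℕ → ℕ)) (hb : IsBScale b)
    (X : Set (ℕ → ℕ∞)) (hX : X = toInc '' Set.range b ∪ Qset)
    (q : ℕ → (ℕ → ℕ∞)) (hqinj : Function.Injective q) (hqrange : Set.range q = Qset)
    (B' : Set (ℕ → ℕ)) (hB' : B' ⊆ Set.range b) (hB'card : Cardinal.mk ↥B' = bCard)
    (V : ℕ → Set (ℕ → ℕ∞))
    (hVclopen : ∀ n, (∃ O : Set (ℕ → ℕ∞), IsOpen O ∧ V n = O ∩ X) ∧
      (∃ C : Set (ℕ → ℕ∞), IsClosed C ∧ V n = C ∩ X))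
    (hVsub : ∀ n, V n ⊆ X \ {q n}) :
    ∃ f ∈ B', {n : ℕ | toInc f ∉ V n}.Infinite := by
  by_contra hcon
  push_neg at hcon
  have hfin : ∀ f ∈ B', {n : ℕ | toInc f ∉ V n}.Finite := fun f hf =>
    hcon f hf
  have hQX : Qset ⊆ X := by rw [hX]; exact subset_union_right
  have hqQ : ∀ n, q n ∈ Qset := fun n => by rw [← hqrange]; exact mem_range_self n
  choose C hCcl hVC using fun n => (hVclopen n).2
  have hqnC : ∀ n, q n ∉ C n := by
    intro n hn
    exact (hVsub n (by rw [hVC n]; exact ⟨hn, hQX (hqQ n)⟩)).2 rfl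
  choose F t hFt using fun n => qpoint_nbhd (hCcl n) (hqnC n)
  have hidx0 : ∀ y : ℕ → ℕ∞, ∃ n, y ∈ Qset → q n = y := by
    intro y
    by_cases h : y ∈ Qset
    · rw [← hqrange] at h
      obtain ⟨n, hn⟩ := h
      exact ⟨n, fun _ => hn⟩
    · exact ⟨0, fun h' => absurd h' h⟩
  choose idx hidx using hidx0
  -- the key combinatorial bound
  have key : ∀ f, Monotone f → ∀ m, toInc f ∈ V (idx (Pfun f m)) →
      f m ≤ t (idx (Pfun f m)) := by
    intro f hmono m hfV
    set n := idx (Pfun f m) with hn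
    have hq : q n = Pfun f m := hidx _ (Pfun_mem_Qset hmono m)
    by_contra hle
    push_neg at hle
    have hout : toInc f ∉ C n := by
      apply hFt n (toInc f)
      · intro j hjF hne
        rw [hq] at hne ⊢
        by_cases hjm : j < m
        · simp [Pfun, toInc, hjm]
        · simp [Pfun, hjm] at hne
      · intro j hjF htop
        rw [hq] at htop
        have hjm : ¬ j < m := by
          intro h
          simp [Pfun, h] at htop
        have hlt : t n < f j := lt_of_lt_of_le hle (hmono (by omega : m ≤ j))
        exact (Nat.cast_lt.mpr hlt : ((t n : ℕ) : ℕ∞) < ((f j : ℕ) : ℕ∞))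
    rw [hVC n] at hfV
    exact hout hfV.1
  -- eventual version, for members of B'
  have hbound : ∀ f ∈ B', ∃ M, ∀ m, M < m → f m ≤ t (idx (Pfun f m)) := by
    intro f hf
    have hmono : Monotone f := by
      obtain ⟨α, rfl⟩ := hB' hf
      exact (hb.strictMono α).monotone
    obtain ⟨Nb, hNb⟩ := (hfin f hf).bddAbove
    have hN : ∀ n, Nb < n → toInc f ∈ V n := by
      intro n hn
      by_contra h
      exact absurd (hNb (show n ∈ {n : ℕ | toInc f ∉ V n} from h)) (by omega)
    have heinj : Function.Injective (fun m => idx (Pfun f m)) := by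
      intro m m' h
      have h1 : q (idx (Pfun f m)) = Pfun f m := hidx _ (Pfun_mem_Qset hmono m)
      have h2 : q (idx (Pfun f m')) = Pfun f m' := hidx _ (Pfun_mem_Qset hmono m')
      exact Pfun_inj (h1 ▸ h2 ▸ congrArg q h)
    have hfin2 : {m | idx (Pfun f m) ≤ Nb}.Finite := by
      have heq : {m | idx (Pfun f m) ≤ Nb} = (fun m => idx (Pfun f m)) ⁻¹' (Set.Iic Nb) := rfl
      rw [heq]
      exact Set.Finite.preimage heinj.injOn (Set.finite_Iic Nb)
    obtain ⟨M, hM⟩ := hfin2.bddAbove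
    refine ⟨M, fun m hm => key f hmono m (hN _ ?_)⟩
    by_contra h
    push_neg at h
    exact absurd (hM (show m ∈ {m | idx (Pfun f m) ≤ Nb} from h)) (by omega)
  -- a single function dominating all of B'
  set gs : ℕ → ℕ := fun n =>
    (Finset.range (n+1) ×ˢ Finset.range (n+1)).sup (fun p => Hrec t idx p.1 p.2 n) with hgs
  have hdom : ∀ f ∈ B', ∀ᶠ n in atTop, f n ≤ gs n := by
    intro f hf
    have hmono : Monotone f := by
      obtain ⟨α, rfl⟩ := hB' hf
      exact (hb.strictMono α).monotone
    obtain ⟨M, hM⟩ := hbound f hf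
    have hH := le_Hrec t idx f hmono M hM
    rw [eventually_atTop]
    refine ⟨max M (f M), fun n hn => ?_⟩
    have hms : (M, f M) ∈ Finset.range (n+1) ×ˢ Finset.range (n+1) := by
      simp only [Finset.mem_product, Finset.mem_range]
      omega
    exact (hH n).trans (Finset.le_sup (f := fun p => Hrec t idx p.1 p.2 n) hms)
  -- but B' is unbounded
  have hA : Cardinal.mk ↥(b ⁻¹' B') = Cardinal.lift.{1} bCard := by
    have h := Cardinal.mk_preimage_of_injective_of_subset_range_lift b B' hb.inj hB'
    rw [Cardinal.lift_uzero] at h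
    rw [h, hB'card]
  obtain ⟨f0, hf0, hf0g⟩ : ∃ f ∈ B', ¬ ∀ᶠ n in atTop, f n ≤ gs n := by
    obtain ⟨α, hα⟩ := hb.unbounded gs
    by_cases hex : ∃ β, β ∈ b ⁻¹' B' ∧ α ≤ β
    · obtain ⟨β, hβA, hαβ⟩ := hex
      refine ⟨b β, hβA, fun hev => hα ?_⟩
      rcases lt_or_eq_of_le hαβ with h | h
      · exact ((hb.mono α β h).and hev).mono fun n hn => hn.1.trans hn.2
      · rwa [h]
    · exfalso
      push_neg at hex
      have hsub : b ⁻¹' B' ⊆ Set.Iio α := fun β hβ => hex β hβ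
      have hle : Cardinal.mk ↥(b ⁻¹' B') ≤ Cardinal.mk ↥(Set.Iio α.val) := by
        apply Cardinal.mk_le_of_injective (f := fun x : ↥(b ⁻¹' B') =>
          (⟨x.val.val, hsub x.2⟩ : ↥(Set.Iio α.val)))
        intro x y hxy
        simp only [Subtype.mk.injEq] at hxy
        exact Subtype.ext (Subtype.ext (congrArg (fun z : ↥(Set.Iio α.val) => z.val) hxy))
      rw [hA, Ordinal.mk_Iio_ordinal] at hle
      have hcard : (α.val).card < bCard := Cardinal.lt_ord.mp α.2
      exact absurd (Cardinal.lift_le.mp hle) (not_le.mpr hcard)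
  exact hf0g (hdom f0 hf0)
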